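/- Very colorful Carathéodory theorem: Let X_1, ..., X_d ⊆ R^d be sets each of whose convex hulls contains a point p, and let q ∈ R^d. Then there exist x_1 ∈ X_1, ..., x_d ∈ X_d such that p ∈ conv{x_1, ..., x_d, q}. -/

import Mathlib

open Set Submodule Finset Filter

noncomputable section VCC

variable {d : ℕ}

abbrev Ed (d : ℕ) : Type := Fin d → ℝ

/-- A point avoiding finitely many proper subspaces. -/
lemma vcc_avoid_lin (s : Finset (Submodule ℝ (Ed d))) :
    ∃ g : Ed d, ∀ W ∈ s, W ≠ ⊤ → g ∉ W := by
  classical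
  induction s using Finset.induction_on with
  | empty => exact ⟨0, by simp⟩
  | @insert W₀ s hW₀s ih =>
    obtain ⟨g, hg⟩ := ih
    by_cases htop : W₀ = ⊤
    · refine ⟨g, ?_⟩
      intro W hW hWt
      rcases Finset.mem_insert.mp hW with h | h
      · exact absurd (h ▸ htop) hWt
      · exact hg W h hWt
    · by_cases hgW₀ : g ∉ W₀
      · refine ⟨g, ?_⟩
        intro W hW hWt
        rcases Finset.mem_insert.mp hW with h | h
        · exact h ▸ hgW₀
        · exact hg W h hWt
      · push_neg at hgW₀
        -- pick h ∉ W₀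
        have : ∃ h : Ed d, h ∉ W₀ := by
          by_contra hc
          push_neg at hc
          exact htop (Submodule.eq_top_iff'.mpr hc)
        obtain ⟨h, hh⟩ := this
        -- bad ε sets are subsingletons
        have hbad : ∀ W ∈ insert W₀ s, W ≠ ⊤ → {ε : ℝ | g + ε • h ∈ W}.Subsingleton := by
          intro W hW hWt ε₁ h₁ ε₂ h₂
          by_contra hne
          have hdiff : (ε₁ - ε₂) • h ∈ W := by
            have := W.sub_mem h₁ h₂
            simpa [sub_smul, add_sub_add_left_eq_sub] using this
          have hhW : h ∈ W := by
            have hne' : ε₁ - ε₂ ≠ 0 := sub_ne_zero.mpr hne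
            have := W.smul_mem (ε₁ - ε₂)⁻¹ hdiff
            rwa [smul_smul, inv_mul_cancel₀ hne', one_smul] at this
          rcases Finset.mem_insert.mp hW with rfl | hWs
          · exact hh hhW
          · have hgw : g ∈ W := by
              have := W.sub_mem h₁ (W.smul_mem ε₁ hhW)
              simpa using this
            exact hg W hWs hWt hgw
        -- collect bad eps
        have hfin : (⋃ W ∈ (insert W₀ s : Finset _), if W ≠ ⊤ then {ε : ℝ | g + ε • h ∈ W} else ∅).Finite := by
          apply Set.Finite.biUnion (Finset.finite_toSet _)
          intro W hW
          by_cases hWt : W ≠ ⊤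
          · rw [if_pos hWt]
            exact (hbad W hW hWt).finite
          · rw [if_neg hWt]
            exact Set.finite_empty
        obtain ⟨ε, hε⟩ := (hfin.infinite_compl).nonempty
        refine ⟨g + ε • h, ?_⟩
        intro W hW hWt hmem
        apply hε
        refine Set.mem_biUnion hW ?_
        rw [if_pos hWt]
        exact hmem

/-- A point in a given ball avoiding finitely many translates of proper subspaces. -/
lemma vcc_avoid_aff {ι : Type} [Finite ι] (c : ι → Ed d) (W : ι → Submodule ℝ (Ed d))
    (hW : ∀ i, W i ≠ ⊤) (x₀ : Ed d) {ε : ℝ} (hε : 0 < ε) :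
    ∃ x : Ed d, ‖x - x₀‖ < ε ∧ ∀ i, x - c i ∉ W i := by
  classical
  cases isEmpty_or_nonempty ι with
  | inl hempty => exact ⟨x₀, by simpa using hε, fun i => (IsEmpty.false i).elim⟩
  | inr hne =>
    have : ∃ h : Ed d, ∀ i, h ∉ W i := by
      haveI : Fintype ι := Fintype.ofFinite ι
      obtain ⟨g, hg⟩ := vcc_avoid_lin (Finset.univ.image W)
      exact ⟨g, fun i => hg (W i) (Finset.mem_image_of_mem W (Finset.mem_univ i)) (hW i)⟩
    obtain ⟨h, hh⟩ := this
    have hh0 : h ≠ 0 := fun h0 => hh (Classical.arbitrary ι) (h0 ▸ (W _).zero_mem)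
    have hhn : 0 < ‖h‖ := norm_pos_iff.mpr hh0
    -- bad t per i is subsingleton
    have hbad : ∀ i, {t : ℝ | x₀ + t • h - c i ∈ W i}.Subsingleton := by
      intro i t₁ h₁ t₂ h₂
      by_contra hne'
      have hdiff : (t₁ - t₂) • h ∈ W i := by
        have := (W i).sub_mem h₁ h₂
        have heq : (x₀ + t₁ • h - c i) - (x₀ + t₂ • h - c i) = (t₁ - t₂) • h := by
          rw [sub_smul]; abel
        rwa [heq] at this
      have : h ∈ W i := by
        have hne'' : t₁ - t₂ ≠ 0 := sub_ne_zero.mpr hne'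
        have := (W i).smul_mem (t₁ - t₂)⁻¹ hdiff
        rwa [smul_smul, inv_mul_cancel₀ hne'', one_smul] at this
      exact hh i this
    haveI : Fintype ι := Fintype.ofFinite ι
    have hfin : (⋃ i : ι, {t : ℝ | x₀ + t • h - c i ∈ W i}).Finite :=
      Set.finite_iUnion (fun i => (hbad i).finite)
    have hIoo : (Set.Ioo (0:ℝ) (ε / ‖h‖)).Infinite := Set.Ioo_infinite (by positivity)
    obtain ⟨t, htI, htbad⟩ := (hIoo.diff hfin).nonempty
    refine ⟨x₀ + t • h, ?_, ?_⟩
    · have : ‖x₀ + t • h - x₀‖ = |t| * ‖h‖ := by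
        simp [norm_smul, Real.norm_eq_abs]
      rw [this, abs_of_pos htI.1]
      calc t * ‖h‖ < (ε / ‖h‖) * ‖h‖ := by
            exact mul_lt_mul_of_pos_right htI.2 hhn
        _ = ε := div_mul_cancel₀ ε (ne_of_gt hhn)
    · intro i hmem
      exact htbad (Set.mem_iUnion.mpr ⟨i, hmem⟩)









lemma vcc_finrank : Module.finrank ℝ (Ed d) = d := by
  simpa using Module.finrank_fintype_fun_eq_card ℝ (η := Fin d)

lemma vcc_span_ne_top {T : Finset (Ed d)} (h : T.card < d) :
    Submodule.span ℝ (T : Set (Ed d)) ≠ ⊤ := by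
  intro htop
  have h1 : Set.finrank ℝ (T : Set (Ed d)) ≤ T.card := finrank_span_finset_le_card T
  rw [Set.finrank, htop, finrank_top, vcc_finrank] at h1
  omega

/-- persistence of nonnegativity for affine coordinate functions -/
lemma vcc_affine_persist (hd : 0 < d) (g h : Fin d → ℝ) (hg : ∀ j, 0 ≤ g j)
    (hh : ∀ j, g j = 0 → 0 ≤ h j) :
    ∃ ε : ℝ, 0 < ε ∧ ∀ τ : ℝ, 0 ≤ τ → τ ≤ ε → ∀ j, 0 ≤ g j + τ * h j := by
  haveI : Nonempty (Fin d) := ⟨⟨0, hd⟩⟩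
  classical
  set F : Fin d → ℝ := fun j => if g j = 0 then 1 else g j / (|h j| + 1) with hF
  have hFpos : ∀ j, 0 < F j := by
    intro j
    by_cases hj : g j = 0
    · simp [hF, hj]
    · have : 0 < g j := lt_of_le_of_ne (hg j) (Ne.symm hj)
      simp only [hF, hj, if_false]
      positivity
  refine ⟨Finset.univ.inf' Finset.univ_nonempty F, ?_, ?_⟩
  · rw [Finset.lt_inf'_iff]
    exact fun j _ => hFpos j
  · intro τ hτ0 hτε j
    by_cases hj : g j = 0
    · have := hh j hj
      nlinarith
    · have hgj : 0 < g j := lt_of_le_of_ne (hg j) (Ne.symm hj)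
      have hτF : τ ≤ F j := le_trans hτε (Finset.inf'_le _ (Finset.mem_univ j))
      have hFj : F j = g j / (|h j| + 1) := by simp [hF, hj]
      rw [hFj] at hτF
      have habs : 0 ≤ |h j| := abs_nonneg _
      have h1 : τ * |h j| ≤ (g j / (|h j| + 1)) * |h j| := by
        apply mul_le_mul_of_nonneg_right hτF habs
      have h2 : (g j / (|h j| + 1)) * |h j| ≤ g j := by
        rw [div_mul_eq_mul_div, div_le_iff₀ (by positivity)]
        nlinarith
      have h3 : -(τ * h j) ≤ τ * |h j| := by
        rw [← mul_neg]
        apply mul_le_mul_of_nonneg_left (neg_le_abs _) hτ0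
      linarith










section Core

variable {κ : Fin d → Type} [∀ i, Fintype (κ i)] [∀ i, Nonempty (κ i)]

/-- every colorful selection is linearly independent -/
def VColorful (u : ∀ i, κ i → Ed d) : Prop :=
  ∀ k : ∀ i, κ i, LinearIndependent ℝ (fun i => u i (k i))

variable {u : ∀ i, κ i → Ed d} (hd : 0 < d) (hu : VColorful u)

/-- the basis attached to a selection -/
def selB (hd : 0 < d) (hu : VColorful u) (k : ∀ i, κ i) : Module.Basis (Fin d) ℝ (Ed d) :=
  haveI : Nonempty (Fin d) := ⟨⟨0, hd⟩⟩
  basisOfLinearIndependentOfCardEqFinrank (hu k) (by simp [vcc_finrank])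

lemma selB_apply (k : ∀ i, κ i) (i : Fin d) : selB hd hu k i = u i (k i) := by
  haveI : Nonempty (Fin d) := ⟨⟨0, hd⟩⟩
  rw [selB, coe_basisOfLinearIndependentOfCardEqFinrank]

/-- decomposition along a selection basis -/
lemma selB_sum_repr (k : ∀ i, κ i) (x : Ed d) :
    ∑ i, ((selB hd hu k).repr x) i • u i (k i) = x := by
  calc ∑ i, ((selB hd hu k).repr x) i • u i (k i)
      = ∑ i, ((selB hd hu k).repr x) i • (selB hd hu k i) := by
        apply Finset.sum_congr rfl
        intro i _
        rw [selB_apply]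
    _ = x := Module.Basis.sum_repr _ x

/-- uniqueness of coordinates -/
lemma selB_unique (k : ∀ i, κ i) (g : Fin d → ℝ) (x : Ed d)
    (hx : x = ∑ i, g i • u i (k i)) (i : Fin d) : (selB hd hu k).repr x i = g i := by
  have h0 : ∑ j, ((selB hd hu k).repr x j - g j) • u j (k j) = 0 := by
    simp only [sub_smul, Finset.sum_sub_distrib]
    rw [selB_sum_repr hd hu k x, ← hx, sub_self]
  have := (Fintype.linearIndependent_iff.mp (hu k)) _ h0 i
  linarith [this]

/-- membership in spans from vanishing coordinates -/
lemma selB_mem_span (k : ∀ i, κ i) (x : Ed d) (S : Finset (Fin d))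
    (h : ∀ j, j ∉ S → (selB hd hu k).repr x j = 0) :
    x ∈ span ℝ ((fun a => u a (k a)) '' (S : Set (Fin d))) := by
  have hx : x = ∑ j ∈ S, ((selB hd hu k).repr x) j • u j (k j) := by
    rw [Finset.sum_subset (Finset.subset_univ S) (fun j _ hj => by rw [h j hj, zero_smul])]
    exact (selB_sum_repr hd hu k x).symm
  rw [hx]
  apply Submodule.sum_mem
  intro j hj
  exact Submodule.smul_mem _ _ (Submodule.subset_span ⟨j, hj, rfl⟩)

end Core



section Core2

variable {κ : Fin d → Type} [∀ i, Fintype (κ i)] [∀ i, Nonempty (κ i)]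
variable {u : ∀ i, κ i → Ed d}

theorem vcc_core (hd : 0 < d) (hu : VColorful u) (w : ∀ i, κ i → ℝ)
    (hw : ∀ i k', 0 < w i k') (hzs : ∀ i, ∑ k' : κ i, w i k' • u i k' = 0) (v : Ed d) :
    ∃ (k : ∀ i, κ i) (lam : Fin d → ℝ), (∀ i, 0 ≤ lam i) ∧ v = ∑ i, lam i • u i (k i) := by
  classical
  haveI : Nonempty (Fin d) := ⟨⟨0, hd⟩⟩
  set k₀ : ∀ i, κ i := fun i => Classical.arbitrary (κ i) with hk₀
  set y₀ : Ed d := ∑ i, u i (k₀ i) with hy₀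
  have hy₀co : ∀ i, (selB hd hu k₀).repr y₀ i = 1 := by
    intro i
    apply selB_unique hd hu k₀ (fun _ => 1) y₀
    simp [hy₀]
  have hcont : ∀ (k : ∀ i, κ i) (i : Fin d),
      Continuous fun x : Ed d => (selB hd hu k).repr x i := by
    intro k i
    have heq : (fun x : Ed d => (selB hd hu k).repr x i)
        = fun x => (selB hd hu k).coord i x := by
      funext x; rw [Module.Basis.coord_apply]
    rw [heq]
    exact LinearMap.continuous_of_finiteDimensional _
  have hopen : IsOpen {x : Ed d | ∀ i, 0 < (selB hd hu k₀).repr x i} := by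
    have heq : {x : Ed d | ∀ i, 0 < (selB hd hu k₀).repr x i} =
        ⋂ i, {x : Ed d | 0 < (selB hd hu k₀).repr x i} := by
      ext x; simp [Set.mem_iInter]
    rw [heq]
    exact isOpen_iInter_of_finite fun i => isOpen_lt continuous_const (hcont k₀ i)
  have hy₀mem : y₀ ∈ {x : Ed d | ∀ i, 0 < (selB hd hu k₀).repr x i} := by
    intro i; rw [hy₀co i]; norm_num
  obtain ⟨ρ, hρpos, hball⟩ := Metric.isOpen_iff.mp hopen y₀ hy₀mem
  -- avoidance conditions for v₀
  let img : (∀ i, κ i) → Finset (Fin d) → Finset (Ed d) := fun k S => S.image (fun a => u a (k a))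
  let Wf : ((∀ i, κ i) × Finset (Fin d) × Fin 3) → Submodule ℝ (Ed d) := fun t =>
    if t.2.2 = 2 then
      (if t.2.1.card + 1 < d then span ℝ ((insert v (img t.1 t.2.1) : Finset (Ed d)) : Set (Ed d)) else ⊥)
    else
      (if t.2.1.card < d then span ℝ ((img t.1 t.2.1 : Finset (Ed d)) : Set (Ed d)) else ⊥)
  let cf : ((∀ i, κ i) × Finset (Fin d) × Fin 3) → Ed d := fun t => if t.2.2 = 1 then v else 0
  haveI : Nontrivial (Ed d) := by
    apply Function.nontrivial
  have hWf : ∀ t, Wf t ≠ ⊤ := by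
    rintro ⟨k, S, j⟩
    by_cases hj : j = 2
    · simp only [Wf, hj, if_pos]
      by_cases hcard : S.card + 1 < d
      · rw [if_pos hcard]
        apply vcc_span_ne_top
        calc (insert v (img k S)).card ≤ (img k S).card + 1 := Finset.card_insert_le _ _
          _ ≤ S.card + 1 := by
              have h := Finset.card_image_le (s := S) (f := fun a => u a (k a))
              simp only [img]
              omega
          _ < d := hcard
      · rw [if_neg hcard]; exact bot_ne_top
    · simp only [Wf, if_neg hj]
      by_cases hcard : S.card < d
      · rw [if_pos hcard]
        apply vcc_span_ne_top
        calc (img k S).card ≤ S.card := Finset.card_image_le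
          _ < d := hcard
      · rw [if_neg hcard]; exact bot_ne_top
  obtain ⟨v₀, hv₀ball, hv₀avoid⟩ := vcc_avoid_aff cf Wf hWf y₀ hρpos
  have hv₀pos : ∀ i, 0 < (selB hd hu k₀).repr v₀ i := by
    have : v₀ ∈ Metric.ball y₀ ρ := by
      rw [Metric.mem_ball, dist_eq_norm]
      exact hv₀ball
    exact hball this
  have himgcoe : ∀ (k : ∀ i, κ i) (S : Finset (Fin d)),
      ((img k S : Finset (Ed d)) : Set (Ed d)) = (fun a => u a (k a)) '' (S : Set (Fin d)) := by
    intro k S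
    simp [img, Finset.coe_image]
  have hAV0 : ∀ (k : ∀ i, κ i) (S : Finset (Fin d)), S.card < d →
      v₀ ∉ span ℝ ((fun a => u a (k a)) '' (S : Set (Fin d))) := by
    intro k S hS hmem
    apply hv₀avoid (k, S, 0)
    simp only [Wf, cf, if_neg (by decide : ¬(0:Fin 3) = 2), if_neg (by decide : ¬(0:Fin 3) = 1),
      if_pos hS, sub_zero, himgcoe]
    exact hmem
  have hAV1 : ∀ (k : ∀ i, κ i) (S : Finset (Fin d)), S.card < d →
      ¬ v₀ - v ∈ span ℝ ((fun a => u a (k a)) '' (S : Set (Fin d))) := by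
    intro k S hS hmem
    apply hv₀avoid (k, S, 1)
    simp only [Wf, cf, if_neg (by decide : ¬(1:Fin 3) = 2), if_pos (by decide : (1:Fin 3) = 1),
      if_pos hS, himgcoe]
    exact hmem
  have hAV2 : ∀ (k : ∀ i, κ i) (S : Finset (Fin d)), S.card + 1 < d →
      v₀ ∉ span ℝ (insert v ((fun a => u a (k a)) '' (S : Set (Fin d)))) := by
    intro k S hS hmem
    apply hv₀avoid (k, S, 2)
    simp only [Wf, cf, if_pos (by decide : (2:Fin 3) = 2), if_neg (by decide : ¬(2:Fin 3) = 1),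
      if_pos hS, sub_zero, Finset.coe_insert, himgcoe]
    exact hmem
  -- the moving target
  set vp : ℝ → Ed d := fun s => v₀ + s • (v - v₀) with hvp
  set L : (∀ i, κ i) → ℝ → Fin d → ℝ := fun k s i => (selB hd hu k).repr (vp s) i with hLdef
  set A : (∀ i, κ i) → Fin d → ℝ := fun k i => (selB hd hu k).repr (v - v₀) i with hAdef
  have haff : ∀ (k : ∀ i, κ i) (s : ℝ) (i : Fin d),
      L k s i = (selB hd hu k).repr v₀ i + s * A k i := by
    intro k s i
    simp only [hLdef, hvp, hAdef, map_add, map_smul, Finsupp.coe_add, Finsupp.coe_smul,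
      Pi.add_apply, Pi.smul_apply, smul_eq_mul]
  have haff2 : ∀ (k : ∀ i, κ i) (s t : ℝ) (i : Fin d),
      L k t i = L k s i + (t - s) * A k i := by
    intro k s t i; rw [haff, haff]; ring
  set Good : ℝ → Prop := fun s => ∃ k : ∀ i, κ i, ∀ i, 0 ≤ L k s i with hGoodDef
  have hGoodClosed : IsClosed {s : ℝ | Good s} := by
    have heq : {s : ℝ | Good s} = ⋃ k : (∀ i, κ i), ⋂ i : Fin d,
        {s : ℝ | 0 ≤ (selB hd hu k).repr v₀ i + s * A k i} := by
      ext s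
      simp only [Set.mem_setOf_eq, Set.mem_iUnion, Set.mem_iInter, hGoodDef]
      constructor
      · rintro ⟨k, hk⟩; exact ⟨k, fun i => by rw [← haff]; exact hk i⟩
      · rintro ⟨k, hk⟩; exact ⟨k, fun i => by rw [haff]; exact hk i⟩
    rw [heq]
    apply isClosed_iUnion_of_finite
    intro k
    apply isClosed_iInter
    intro i
    apply isClosed_le continuous_const
    fun_prop
  -- slopes never vanish
  have hslope : ∀ (k : ∀ i, κ i) (i : Fin d), A k i ≠ 0 := by
    intro k i hAi
    apply hAV1 k (Finset.univ.erase i)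
      (by rw [Finset.card_erase_of_mem (Finset.mem_univ i), Finset.card_univ, Fintype.card_fin]; omega)
    have hmem : v - v₀ ∈ span ℝ
        ((fun a => u a (k a)) '' ((Finset.univ.erase i : Finset (Fin d)) : Set (Fin d))) := by
      apply selB_mem_span hd hu k
      intro j hj
      have hji : j = i := by
        by_contra hne
        exact hj (Finset.mem_erase.mpr ⟨hne, Finset.mem_univ j⟩)
      rw [hji]
      exact hAi
    have h2 := Submodule.neg_mem _ hmem
    simpa using h2
  -- at most one vanishing coordinate before time 1
  have huz : ∀ (k : ∀ i, κ i) (s : ℝ), s < 1 → ∀ i j, i ≠ j →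
      L k s i = 0 → L k s j = 0 → False := by
    intro k s hs i j hij hLi hLj
    set S : Finset (Fin d) := (Finset.univ.erase i).erase j with hS
    have hjmem : j ∈ Finset.univ.erase i := Finset.mem_erase.mpr ⟨Ne.symm hij, Finset.mem_univ j⟩
    have h2d : 2 ≤ d := by
      have h1 := Fintype.one_lt_card_iff_nontrivial.mpr ⟨⟨i, j, hij⟩⟩
      exact (by simpa [Fintype.card_fin] using h1 : 1 < d)
    have hcardS : S.card + 1 < d := by
      rw [hS, Finset.card_erase_of_mem hjmem, Finset.card_erase_of_mem (Finset.mem_univ i),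
        Finset.card_univ, Fintype.card_fin]
      omega
    have h1 : vp s ∈ span ℝ ((fun a => u a (k a)) '' (S : Set (Fin d))) := by
      apply selB_mem_span hd hu k
      intro a ha
      have hor : a = i ∨ a = j := by
        by_contra hc
        push_neg at hc
        apply ha
        rw [hS]
        exact Finset.mem_erase.mpr ⟨hc.2, Finset.mem_erase.mpr ⟨hc.1, Finset.mem_univ a⟩⟩
      rcases hor with h|h
      · rw [h]; exact hLi
      · rw [h]; exact hLj
    have h2 : (1 - s) • v₀ = vp s - s • v := by
      simp only [hvp]
      rw [smul_sub, sub_smul, one_smul]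
      abel
    have h3 : v₀ ∈ span ℝ (insert v ((fun a => u a (k a)) '' (S : Set (Fin d)))) := by
      have hv' : v ∈ span ℝ (insert v ((fun a => u a (k a)) '' (S : Set (Fin d)))) :=
        subset_span (Set.mem_insert _ _)
      have h1' : vp s ∈ span ℝ (insert v ((fun a => u a (k a)) '' (S : Set (Fin d)))) :=
        span_mono (Set.subset_insert _ _) h1
      have h4 : (1 - s) • v₀ ∈ span ℝ (insert v ((fun a => u a (k a)) '' (S : Set (Fin d)))) := by
        rw [h2]; exact Submodule.sub_mem _ h1' (Submodule.smul_mem _ _ hv')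
      have hsne : (1 : ℝ) - s ≠ 0 := by
        intro h0; rw [sub_eq_zero] at h0; exact absurd h0.symm (ne_of_lt hs)
      have h5 := Submodule.smul_mem _ (1 - s)⁻¹ h4
      rwa [smul_smul, inv_mul_cancel₀ hsne, one_smul] at h5
    exact hAV2 k S hcardS h3
  have hGood0 : Good 0 := by
    refine ⟨k₀, fun i => ?_⟩
    rw [haff]
    simp only [zero_mul, add_zero]
    exact le_of_lt (hv₀pos i)
  -- extension lemma: from a good point before time 1, extend a bit to the right
  have hextend : ∀ s : ℝ, s < 1 → Good s → ∃ ε : ℝ, 0 < ε ∧ ∀ t, s ≤ t → t ≤ s + ε → Good t := by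
    intro s hs hGs
    obtain ⟨k, hk⟩ := hGs
    have base : ∀ k2 : (∀ i, κ i), (∀ j, 0 ≤ L k2 s j) → (∀ j, L k2 s j = 0 → 0 ≤ A k2 j) →
        ∃ ε : ℝ, 0 < ε ∧ ∀ t, s ≤ t → t ≤ s + ε → Good t := by
      intro k2 hg hh
      obtain ⟨ε, hεpos, hε⟩ := vcc_affine_persist hd (fun j => L k2 s j) (fun j => A k2 j) hg hh
      refine ⟨ε, hεpos, fun t ht1 ht2 => ⟨k2, fun j => ?_⟩⟩
      rw [haff2 k2 s t j]
      exact hε (t - s) (by linarith) (by linarith) j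
    by_cases hzero : ∀ i, L k s i ≠ 0
    · exact base k hk (fun j hj => absurd hj (hzero j))
    · push_neg at hzero
      obtain ⟨i₀, hi₀⟩ := hzero
      have honly : ∀ j, j ≠ i₀ → 0 < L k s j := by
        intro j hj
        rcases lt_or_eq_of_le (hk j) with h | h
        · exact h
        · exact (huz k s hs j i₀ hj h.symm hi₀).elim
      by_cases hA0 : 0 ≤ A k i₀
      · apply base k hk
        intro j hj
        by_cases hji : j = i₀
        · rwa [hji]
        · exfalso
          have h2 := honly j hji
          rw [hj] at h2
          exact lt_irrefl 0 h2
      · push_neg at hA0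
        -- pivot at colour i₀
        set co : κ i₀ → ℝ := fun k'' => (selB hd hu k).repr (u i₀ k'') i₀ with hco
        have hcone : ∀ k'' : κ i₀, co k'' ≠ 0 := by
          intro k'' h0
          have hsp : u i₀ k'' ∈ span ℝ
              ((fun a => u a (k a)) '' ((Finset.univ.erase i₀ : Finset (Fin d)) : Set (Fin d))) := by
            apply selB_mem_span hd hu k
            intro j hj
            have hji : j = i₀ := by
              by_contra hne
              exact hj (Finset.mem_erase.mpr ⟨hne, Finset.mem_univ j⟩)
            rw [hji]; exact h0
          set k3 := Function.update k i₀ k'' with hk3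
          have hnot := (hu k3).notMem_span_image
            (s := ((Finset.univ.erase i₀ : Finset (Fin d)) : Set (Fin d))) (x := i₀) (by simp)
          apply hnot
          have himg : (fun j => u j (k3 j)) '' ((Finset.univ.erase i₀ : Finset (Fin d)) : Set (Fin d))
              = (fun a => u a (k a)) '' ((Finset.univ.erase i₀ : Finset (Fin d)) : Set (Fin d)) := by
            apply Set.image_congr
            intro j hj
            have hjne : j ≠ i₀ := by
              have := Finset.mem_coe.mp hj
              exact (Finset.mem_erase.mp this).1
            rw [hk3, Function.update_of_ne hjne]
          rw [himg]
          have : u i₀ (k3 i₀) = u i₀ k'' := by rw [hk3, Function.update_self]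
          rw [this]
          exact hsp
        have hsum : ∑ k'' : κ i₀, w i₀ k'' * co k'' = 0 := by
          have h0 : (selB hd hu k).repr (∑ k'' : κ i₀, w i₀ k'' • u i₀ k'') i₀ = 0 := by
            rw [hzs i₀]; simp
          rw [map_sum, Finsupp.finset_sum_apply] at h0
          simp only [map_smul, Finsupp.smul_apply, smul_eq_mul] at h0
          exact h0
        have hexneg : ∃ kk : κ i₀, co kk < 0 := by
          by_contra hcon
          push_neg at hcon
          have hpos' : ∀ k'' : κ i₀, 0 < co k'' :=
            fun k'' => lt_of_le_of_ne (hcon k'') (Ne.symm (hcone k''))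
          have hgt : 0 < ∑ k'' : κ i₀, w i₀ k'' * co k'' :=
            Finset.sum_pos (fun k'' _ => mul_pos (hw i₀ k'') (hpos' k'')) Finset.univ_nonempty
          rw [hsum] at hgt
          exact lt_irrefl 0 hgt
        obtain ⟨kk, hkk⟩ := hexneg
        have hcne : co kk ≠ 0 := ne_of_lt hkk
        set k2 := Function.update k i₀ kk with hk2
        set cs : Fin d → ℝ := fun j => (selB hd hu k).repr (u i₀ kk) j with hcs
        have hcsi : cs i₀ = co kk := rfl
        have hukk : u i₀ kk = ∑ j, cs j • u j (k j) := by
          conv_lhs => rw [← selB_sum_repr hd hu k (u i₀ kk)]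
        -- new coordinates in the pivoted basis
        have hrepr2 : ∀ (t : ℝ) (j : Fin d), L k2 t j =
            (if j = i₀ then L k t i₀ / co kk else L k t j - (L k t i₀ / co kk) * cs j) := by
          intro t j
          apply selB_unique hd hu k2
            (fun a => if a = i₀ then L k t i₀ / co kk else L k t a - (L k t i₀ / co kk) * cs a) (vp t)
          have step1 : ∑ a, (if a = i₀ then L k t i₀ / co kk else L k t a - (L k t i₀ / co kk) * cs a) • u a (k2 a)
              = (L k t i₀ / co kk) • u i₀ kk
                + ∑ a ∈ Finset.univ.erase i₀, (L k t a - (L k t i₀ / co kk) * cs a) • u a (k a) := by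
            rw [← Finset.add_sum_erase _ _ (Finset.mem_univ i₀), if_pos rfl]
            congr 1
            · rw [hk2, Function.update_self]
            · refine Finset.sum_congr rfl fun a ha => ?_
              have hane : a ≠ i₀ := (Finset.mem_erase.mp ha).1
              rw [if_neg hane, hk2, Function.update_of_ne hane]
          have step2 : (L k t i₀ / co kk) • u i₀ kk
              = L k t i₀ • u i₀ (k i₀)
                + ∑ a ∈ Finset.univ.erase i₀, ((L k t i₀ / co kk) * cs a) • u a (k a) := by
            rw [hukk, Finset.smul_sum]
            rw [← Finset.add_sum_erase _ (fun a => (L k t i₀ / co kk) • (cs a • u a (k a))) (Finset.mem_univ i₀)]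
            congr 1
            · rw [smul_smul, hcsi, div_mul_cancel₀ _ hcne]
            · refine Finset.sum_congr rfl fun a _ => ?_
              rw [smul_smul]
          have step3 : ∑ a ∈ Finset.univ.erase i₀, ((L k t i₀ / co kk) * cs a) • u a (k a)
                + ∑ a ∈ Finset.univ.erase i₀, (L k t a - (L k t i₀ / co kk) * cs a) • u a (k a)
              = ∑ a ∈ Finset.univ.erase i₀, L k t a • u a (k a) := by
            rw [← Finset.sum_add_distrib]
            refine Finset.sum_congr rfl fun a _ => ?_
            rw [← add_smul]
            congr 1
            ring
          rw [step1, step2, add_assoc, step3]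
          rw [Finset.add_sum_erase _ (fun a => L k t a • u a (k a)) (Finset.mem_univ i₀)]
          exact (selB_sum_repr hd hu k (vp t)).symm
        have keyk : ∀ (kx : ∀ i, κ i) (j : Fin d), L kx (s+1) j - L kx s j = A kx j := by
          intro kx j
          have h := haff2 kx s (s+1) j
          rw [show s + 1 - s = (1:ℝ) by ring, one_mul] at h
          linarith
        have hA2 : ∀ j, A k2 j = (if j = i₀ then A k i₀ / co kk else A k j - (A k i₀ / co kk) * cs j) := by
          intro j
          rw [← keyk k2 j, hrepr2 (s+1) j, hrepr2 s j]
          by_cases hj : j = i₀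
          · rw [if_pos hj, if_pos hj, if_pos hj]
            rw [div_sub_div_same, keyk k i₀]
          · rw [if_neg hj, if_neg hj, if_neg hj]
            rw [← keyk k j, ← keyk k i₀]
            ring
        apply base k2
        · intro j
          rw [hrepr2 s j]
          by_cases hj : j = i₀
          · rw [if_pos hj, hi₀, zero_div]
          · rw [if_neg hj, hi₀, zero_div, zero_mul, sub_zero]
            exact le_of_lt (honly j hj)
        · intro j hj0
          rw [hA2 j]
          by_cases hj : j = i₀
          · rw [if_pos hj]
            exact le_of_lt (div_pos_of_neg_of_neg hA0 hkk)
          · exfalso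
            rw [hrepr2 s j, if_neg hj, hi₀, zero_div, zero_mul, sub_zero] at hj0
            exact ne_of_gt (honly j hj) hj0
  -- supremum argument
  set T : Set ℝ := {s | s ∈ Set.Icc (0:ℝ) 1 ∧ ∀ t ∈ Set.Icc (0:ℝ) s, Good t} with hT
  have hT0 : (0:ℝ) ∈ T := by
    refine ⟨⟨le_refl 0, by norm_num⟩, fun t ht => ?_⟩
    have h0 : t = 0 := le_antisymm ht.2 ht.1
    rwa [h0]
  have hTbdd : BddAbove T := ⟨1, fun s hs => hs.1.2⟩
  set m := sSup T with hm
  have hm0 : 0 ≤ m := le_csSup hTbdd hT0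
  have hm1 : m ≤ 1 := csSup_le ⟨0, hT0⟩ (fun s hs => hs.1.2)
  have hGoodm : ∀ t, 0 ≤ t → t ≤ m → Good t := by
    intro t ht0 htm
    rcases lt_or_eq_of_le htm with h | h
    · obtain ⟨s', hs'T, hts'⟩ := exists_lt_of_lt_csSup ⟨0, hT0⟩ h
      exact hs'T.2 t ⟨ht0, le_of_lt hts'⟩
    · subst h
      have h1 : sSup T ∈ closure T := csSup_mem_closure ⟨0, hT0⟩ hTbdd
      have h2 : T ⊆ {s | Good s} := fun s hs => hs.2 s ⟨hs.1.1, le_refl s⟩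
      have h3 : sSup T ∈ closure {s | Good s} := closure_mono h2 h1
      rwa [hGoodClosed.closure_eq] at h3
  have hmfin : m = 1 := by
    by_contra hne
    have hmlt : m < 1 := lt_of_le_of_ne hm1 hne
    obtain ⟨ε, hεpos, hε⟩ := hextend m hmlt (hGoodm m hm0 (le_refl m))
    set m' := min (m + ε) 1 with hm'
    have hm'T : m' ∈ T := by
      refine ⟨⟨?_, min_le_right _ _⟩, ?_⟩
      · have : (0:ℝ) ≤ m + ε := by linarith
        exact le_min this (by norm_num)
      · intro t ht
        by_cases htm : t ≤ m
        · exact hGoodm t ht.1 htm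
        · push_neg at htm
          apply hε t (le_of_lt htm)
          calc t ≤ m' := ht.2
            _ ≤ m + ε := min_le_left _ _
    have h4 : m' ≤ m := le_csSup hTbdd hm'T
    have h5 : m < m' := lt_min (by linarith) hmlt
    linarith
  have hGood1 : Good 1 := hGoodm 1 (by norm_num) (by rw [hmfin])
  obtain ⟨k, hk⟩ := hGood1
  refine ⟨k, fun i => L k 1 i, hk, ?_⟩
  have hvp1 : vp 1 = v := by simp [hvp]
  rw [← hvp1]
  exact (selB_sum_repr hd hu k _).symm

end Core2





section Assemble
variable {d : ℕ}

/-- perturbing one class, keeping the exact zero-sum, making all its vectors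
avoid the spans of all small subsets of a given prior finite set -/
lemma vcc_perturb_class (P : Finset (Ed d)) {n : ℕ} (u : Option (Fin (n+1)) → Ed d)
    (w : Option (Fin (n+1)) → ℝ) (hw : ∀ k, 0 < w k)
    (hzs : ∑ k, w k • u k = 0) {ε : ℝ} (hε : 0 < ε) :
    ∃ uu : Option (Fin (n+1)) → Ed d, (∀ k, ‖uu k - u k‖ < ε) ∧ (∑ k, w k • uu k = 0) ∧
      (∀ k (T : Finset (Ed d)), T ⊆ P → T.card < d →
        uu k ∉ span ℝ (T : Set (Ed d))) := by
  classical
  set lst : Fin (n+1) := Fin.last n with hlst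
  set W0 : ℝ := w none with hW0
  have hW0pos : 0 < W0 := hw none
  set S0 : ℝ := ∑ k : Fin (n+1), w (some k) with hS0
  have hS0pos : 0 < S0 := Finset.sum_pos (fun k _ => hw (some k)) Finset.univ_nonempty
  set ε' : ℝ := (ε * W0) / (W0 + S0) with hε'
  have hε'pos : 0 < ε' := by positivity
  have hε'le : ε' ≤ ε := by
    rw [hε', div_le_iff₀ (by positivity)]
    nlinarith
  -- index type for avoidance
  set 𝒯 : Finset (Finset (Ed d)) := P.powerset.filter (fun T => T.card < d) with h𝒯
  have hprop : ∀ T ∈ 𝒯, span ℝ ((T : Finset (Ed d)) : Set (Ed d)) ≠ ⊤ := by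
    intro T hT
    rw [h𝒯, Finset.mem_filter] at hT
    exact vcc_span_ne_top hT.2
  -- step 1 : choose the non-special free vectors
  have hfree : ∀ k : Fin (n+1), ∃ x : Ed d, ‖x - u (some k)‖ < ε' ∧
      ∀ T ∈ 𝒯, x ∉ span ℝ ((T : Finset (Ed d)) : Set (Ed d)) := by
    intro k
    obtain ⟨x, hx1, hx2⟩ := vcc_avoid_aff (ι := {T // T ∈ 𝒯}) (fun _ => 0)
      (fun T => span ℝ ((T.1 : Finset (Ed d)) : Set (Ed d))) (fun T => hprop T.1 T.2)
      (u (some k)) hε'pos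
    refine ⟨x, hx1, fun T hT hmem => hx2 ⟨T, hT⟩ ?_⟩
    simpa using hmem
  choose f₀ hf₀close hf₀avoid using hfree
  -- the partial weighted sum of the non-special free vectors
  set z : Ed d := ∑ k ∈ Finset.univ.erase lst, w (some k) • f₀ k with hz
  set wl : ℝ := w (some lst) with hwl
  have hwlpos : 0 < wl := hw (some lst)
  -- step 2 : choose the special free vector
  have hspecial : ∃ x : Ed d, ‖x - u (some lst)‖ < ε' ∧
      (∀ T ∈ 𝒯, x ∉ span ℝ ((T : Finset (Ed d)) : Set (Ed d))) ∧
      (∀ T ∈ 𝒯, x - (-(wl⁻¹) • z) ∉ span ℝ ((T : Finset (Ed d)) : Set (Ed d))) := by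
    obtain ⟨x, hx1, hx2⟩ := vcc_avoid_aff (ι := {T // T ∈ 𝒯} × Bool)
      (fun Tb => if Tb.2 then (-(wl⁻¹) • z) else 0)
      (fun Tb => span ℝ ((Tb.1.1 : Finset (Ed d)) : Set (Ed d)))
      (fun Tb => hprop Tb.1.1 Tb.1.2) (u (some lst)) hε'pos
    refine ⟨x, hx1, fun T hT hmem => hx2 (⟨T, hT⟩, false) ?_, fun T hT hmem => hx2 (⟨T, hT⟩, true) ?_⟩
    · simpa using hmem
    · simpa using hmem
  obtain ⟨fl, hflclose, hflavoid, hflavoid2⟩ := hspecial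
  -- assemble the class
  set f : Fin (n+1) → Ed d := fun k => if k = lst then fl else f₀ k with hf
  set compton : Ed d := -(W0⁻¹) • (∑ k : Fin (n+1), w (some k) • f k) with hcompton
  set uu : Option (Fin (n+1)) → Ed d := fun o => Option.rec compton f o with huu
  have huunone : uu none = compton := rfl
  have huusome : ∀ k, uu (some k) = f k := fun k => rfl
  have hfclose : ∀ k, ‖f k - u (some k)‖ < ε' := by
    intro k
    by_cases hk : k = lst
    · rw [hf]; simp only [if_pos hk, hk]; exact hflclose
    · rw [hf]; simp only [if_neg hk]; exact hf₀close k
  have hfavoid : ∀ k, ∀ T ∈ 𝒯, f k ∉ span ℝ ((T : Finset (Ed d)) : Set (Ed d)) := by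
    intro k T hT
    by_cases hk : k = lst
    · rw [hf]; simp only [if_pos hk]; exact hflavoid T hT
    · rw [hf]; simp only [if_neg hk]; exact hf₀avoid k T hT
  -- sum of f equals z + wl • fl
  have hsumf : ∑ k : Fin (n+1), w (some k) • f k = z + wl • fl := by
    rw [← Finset.add_sum_erase _ (fun k => w (some k) • f k) (Finset.mem_univ lst)]
    rw [hz]
    have h1 : f lst = fl := by rw [hf]; simp
    have h2 : ∑ k ∈ Finset.univ.erase lst, w (some k) • f k
        = ∑ k ∈ Finset.univ.erase lst, w (some k) • f₀ k := by
      refine Finset.sum_congr rfl fun k hk => ?_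
      have : k ≠ lst := (Finset.mem_erase.mp hk).1
      rw [hf]; simp [this]
    rw [h1, h2, hwl]
    ring_nf
  -- the original compensator identity
  have huzs : u none = -(W0⁻¹) • (∑ k : Fin (n+1), w (some k) • u (some k)) := by
    rw [Fintype.sum_option] at hzs
    have h1 : W0 • u none = -(∑ k : Fin (n+1), w (some k) • u (some k)) := by
      rw [hW0]; linear_combination (norm := module) hzs
    have h2 := congrArg (fun x => (W0⁻¹ : ℝ) • x) h1
    simp only [smul_smul, inv_mul_cancel₀ (ne_of_gt hW0pos), one_smul] at h2
    rw [h2, smul_neg, neg_smul]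
  refine ⟨uu, ?_, ?_, ?_⟩
  · -- closeness
    intro k
    match k with
    | some k =>
      rw [huusome]
      exact lt_of_lt_of_le (hfclose k) hε'le
    | none =>
      rw [huunone, hcompton, huzs]
      have hdiff : -(W0⁻¹) • (∑ k : Fin (n+1), w (some k) • f k)
          - -(W0⁻¹) • (∑ k : Fin (n+1), w (some k) • u (some k))
          = -(W0⁻¹) • (∑ k : Fin (n+1), w (some k) • (f k - u (some k))) := by
        rw [← smul_sub]
        congr 1
        rw [← Finset.sum_sub_distrib]
        refine Finset.sum_congr rfl fun k _ => ?_
        rw [smul_sub]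
      rw [hdiff]
      rw [norm_smul]
      have hb : ‖∑ k : Fin (n+1), w (some k) • (f k - u (some k))‖
          < S0 * ε' := by
        calc ‖∑ k : Fin (n+1), w (some k) • (f k - u (some k))‖
            ≤ ∑ k : Fin (n+1), ‖w (some k) • (f k - u (some k))‖ := norm_sum_le _ _
          _ = ∑ k : Fin (n+1), w (some k) * ‖f k - u (some k)‖ := by
              refine Finset.sum_congr rfl fun k _ => ?_
              rw [norm_smul, Real.norm_eq_abs, abs_of_pos (hw (some k))]
          _ < ∑ k : Fin (n+1), w (some k) * ε' := by
              apply Finset.sum_lt_sum_of_nonempty Finset.univ_nonempty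
              intro k _
              exact mul_lt_mul_of_pos_left (hfclose k) (hw (some k))
          _ = S0 * ε' := by rw [hS0, Finset.sum_mul]
      have hnormW : ‖-(W0⁻¹)‖ = W0⁻¹ := by
        rw [norm_neg, Real.norm_eq_abs, abs_of_pos (by positivity)]
      rw [hnormW]
      calc W0⁻¹ * ‖∑ k : Fin (n+1), w (some k) • (f k - u (some k))‖
          < W0⁻¹ * (S0 * ε') := by
            apply mul_lt_mul_of_pos_left hb (by positivity)
        _ = ε * (S0 / (W0 + S0)) := by
            rw [hε']
            field_simp
        _ ≤ ε := by
            have h9 : S0 / (W0 + S0) ≤ 1 := by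
              rw [div_le_one (by positivity)]
              linarith
            nlinarith
  · -- zero sum
    rw [Fintype.sum_option]
    simp only [huunone, huusome, hcompton]
    rw [smul_smul]
    rw [hW0, mul_neg, mul_inv_cancel₀ (ne_of_gt hW0pos), neg_smul, one_smul]
    abel
  · -- avoidance
    intro k T hTP hTd
    have hT𝒯 : T ∈ 𝒯 := by
      rw [h𝒯, Finset.mem_filter, Finset.mem_powerset]
      exact ⟨hTP, hTd⟩
    match k with
    | some k => exact hfavoid k T hT𝒯
    | none =>
      rw [huunone, hcompton, hsumf]
      intro hmem
      -- scale by -W0 : z + wl • fl ∈ span T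
      have h1 : (-(W0) : ℝ) • (-(W0⁻¹) • (z + wl • fl)) ∈ span ℝ ((T : Finset (Ed d)) : Set (Ed d)) :=
        Submodule.smul_mem _ _ hmem
      rw [smul_smul, neg_mul_neg, mul_inv_cancel₀ (ne_of_gt hW0pos), one_smul] at h1
      -- scale by wl⁻¹ : wl⁻¹ • z + fl ∈ span T
      have h2 : (wl⁻¹ : ℝ) • (z + wl • fl) ∈ span ℝ ((T : Finset (Ed d)) : Set (Ed d)) :=
        Submodule.smul_mem _ _ h1
      rw [smul_add, smul_smul, inv_mul_cancel₀ (ne_of_gt hwlpos), one_smul] at h2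
      apply hflavoid2 T hT𝒯
      have heq : fl - (-(wl⁻¹) • z) = wl⁻¹ • z + fl := by
        rw [neg_smul, sub_neg_eq_add]
        abel
      rw [heq]
      exact h2

/-- vectors each avoiding the span of the previous ones are independent -/
lemma vcc_li_of_span {n : ℕ} (f : Fin n → Ed d)
    (h : ∀ i : Fin n, f i ∉ span ℝ (f '' {j | j < i})) : LinearIndependent ℝ f := by
  induction n with
  | zero => exact linearIndependent_empty_type
  | succ n ih =>
    have hf : f = Fin.snoc (Fin.init f) (f (Fin.last n)) := (Fin.snoc_init_self f).symm
    rw [hf, linearIndependent_fin_snoc]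
    constructor
    · apply ih
      intro i hmem
      apply h i.castSucc
      have himg : (Fin.init f) '' {j : Fin n | j < i} ⊆ f '' {j : Fin (n+1) | j < i.castSucc} := by
        rintro x ⟨j, hj, rfl⟩
        exact ⟨j.castSucc, by simpa [Fin.castSucc_lt_castSucc_iff] using hj, rfl⟩
      have hini : Fin.init f i = f i.castSucc := rfl
      rw [← hini]
      exact span_mono himg hmem
    · intro hmem
      apply h (Fin.last n)
      have himg : Set.range (Fin.init f) ⊆ f '' {j : Fin (n+1) | j < Fin.last n} := by
        rintro x ⟨j, rfl⟩
        exact ⟨j.castSucc, Fin.castSucc_lt_last j, rfl⟩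
      exact span_mono himg hmem

/-- perturbation of all classes, achieving colorful general position -/
theorem vcc_perturb {m : Fin d → ℕ} (u : ∀ i, Option (Fin (m i + 1)) → Ed d)
    (w : ∀ i, Option (Fin (m i + 1)) → ℝ) (hw : ∀ i k, 0 < w i k)
    (hzs : ∀ i, ∑ k, w i k • u i k = 0) {ε : ℝ} (hε : 0 < ε) :
    ∃ uu : ∀ i, Option (Fin (m i + 1)) → Ed d,
      (∀ i k, ‖uu i k - u i k‖ < ε) ∧ (∀ i, ∑ k, w i k • uu i k = 0) ∧
      (∀ k : ∀ i, Option (Fin (m i + 1)), LinearIndependent ℝ (fun i => uu i (k i))) := by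
  classical
  set Pr : (∀ i, Option (Fin (m i + 1)) → Ed d) → Fin d → Finset (Ed d) :=
    fun g i => (Finset.univ.filter (fun i' => i' < i)).biUnion
      (fun i' => Finset.univ.image (g i')) with hPr
  have key : ∀ j : ℕ, j ≤ d → ∃ g : ∀ i, Option (Fin (m i + 1)) → Ed d,
      (∀ i : Fin d, ¬ i.val < j → g i = u i) ∧
      (∀ i : Fin d, i.val < j → (∀ k, ‖g i k - u i k‖ < ε) ∧ (∑ k, w i k • g i k = 0)) ∧
      (∀ i : Fin d, i.val < j → ∀ k (T : Finset (Ed d)), T ⊆ Pr g i → T.card < d →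
        g i k ∉ span ℝ (T : Set (Ed d))) := by
    intro j
    induction j with
    | zero =>
      exact fun _ => ⟨u, fun _ _ => rfl, fun i hi => absurd hi (by omega),
        fun i hi => absurd hi (by omega)⟩
    | succ j ih =>
      intro hj1
      obtain ⟨g, hg1, hg2, hg3⟩ := ih (by omega)
      set ij : Fin d := ⟨j, by omega⟩ with hij
      have hgij : g ij = u ij := hg1 ij (by simp [hij])
      obtain ⟨cg, hcg1, hcg2, hcg3⟩ :=
        vcc_perturb_class (Pr g ij) (u ij) (w ij) (hw ij) (hzs ij) hε
      set g' := Function.update g ij cg with hg'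
      have hg'ij : g' ij = cg := by rw [hg', Function.update_self]
      have hagree : ∀ i : Fin d, i ≠ ij → g' i = g i :=
        fun i hi => Function.update_of_ne hi _ _
      have hPrsame : ∀ i : Fin d, i.val ≤ j → Pr g' i = Pr g i := by
        intro i hi
        apply Finset.biUnion_congr rfl
        intro i' hi'
        have hlt : i' < i := by
          have := Finset.mem_filter.mp hi'
          exact this.2
        have hne : i' ≠ ij := by
          intro hcon
          rw [hcon] at hlt
          have : j < i.val := hlt
          omega
        rw [hagree i' hne]
      refine ⟨g', ?_, ?_, ?_⟩
      · intro i hi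
        have hine : i ≠ ij := by
          intro hcon
          exact hi (by rw [hcon]; exact Nat.lt_succ_self j)
        rw [hagree i hine]
        apply hg1 i
        omega
      · intro i hi
        by_cases hieq : i = ij
        · subst hieq
          rw [hg'ij]
          exact ⟨hcg1, hcg2⟩
        · have hlt : i.val < j := by
            have : i.val ≠ j := fun hcon => hieq (Fin.ext hcon)
            omega
          rw [hagree i hieq]
          exact hg2 i hlt
      · intro i hi k T hTP hTd
        by_cases hieq : i = ij
        · subst hieq
          rw [hg'ij]
          apply hcg3 k T ?_ hTd
          rwa [hPrsame ij (by omega)] at hTP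
        · have hlt : i.val < j := by
            have : i.val ≠ j := fun hcon => hieq (Fin.ext hcon)
            omega
          rw [hagree i hieq]
          apply hg3 i hlt k T ?_ hTd
          rwa [hPrsame i (by omega)] at hTP
  obtain ⟨g, _, hg2, hg3⟩ := key d (le_refl d)
  refine ⟨g, fun i k => (hg2 i i.isLt).1 k, fun i => (hg2 i i.isLt).2, ?_⟩
  intro k
  apply vcc_li_of_span
  intro i hmem
  set T : Finset (Ed d) := (Finset.univ.filter (fun j => j < i)).image (fun j => g j (k j)) with hTdef
  have hTP : T ⊆ Pr g i := by
    intro x hx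
    rw [hTdef, Finset.mem_image] at hx
    obtain ⟨j, hj, rfl⟩ := hx
    exact Finset.mem_biUnion.mpr ⟨j, hj, Finset.mem_image_of_mem _ (Finset.mem_univ _)⟩
  have hd0 : 0 < d := i.pos
  have hTd : T.card < d := by
    calc T.card ≤ (Finset.univ.filter (fun j => j < i)).card := Finset.card_image_le
      _ ≤ (Finset.univ.erase i).card := Finset.card_le_card
          (fun j hj => Finset.mem_erase.mpr
            ⟨ne_of_lt (Finset.mem_filter.mp hj).2, Finset.mem_univ _⟩)
      _ = d - 1 := by
          rw [Finset.card_erase_of_mem (Finset.mem_univ i), Finset.card_univ, Fintype.card_fin]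
      _ < d := by omega
  apply hg3 i i.isLt (k i) T hTP hTd
  have himg : (fun j => g j (k j)) '' {j : Fin d | j < i} = (T : Set (Ed d)) := by
    rw [hTdef, Finset.coe_image]
    congr 1
    ext j
    simp
  rwa [himg] at hmem



theorem vcc_limit {κ : Fin d → Type} [∀ i, Fintype (κ i)] [∀ i, Nonempty (κ i)]
    (u : ∀ i, κ i → Ed d) (useq : ℕ → ∀ i, κ i → Ed d)
    (hconv : ∀ i k, Filter.Tendsto (fun n => useq n i k) Filter.atTop (nhds (u i k)))
    (v : Ed d)
    (hsol : ∀ n, ∃ (k : ∀ i, κ i) (lam : Fin d → ℝ), (∀ i, 0 ≤ lam i) ∧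
      v = ∑ i, lam i • useq n i (k i)) :
    ∃ (k : ∀ i, κ i) (mu : Fin d → ℝ) (c : ℝ), (∀ i, 0 ≤ mu i) ∧ 0 ≤ c ∧
      (∑ i, mu i) + c = 1 ∧ c • v = ∑ i, mu i • u i (k i) := by
  classical
  choose ks lams hlam0 hlameq using hsol
  set tot : ℕ → ℝ := fun n => 1 + ∑ i, lams n i with htot
  have htotpos : ∀ n, 0 < tot n := by
    intro n
    have h0 : 0 ≤ ∑ i, lams n i := Finset.sum_nonneg fun i _ => hlam0 n i
    rw [htot]
    dsimp only
    linarith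
  set mus : ℕ → Fin d → ℝ := fun n i => lams n i / tot n with hmus
  set cs : ℕ → ℝ := fun n => 1 / tot n with hcs
  set K : Set ((Fin d → ℝ) × ℝ) :=
    {p | (∀ i, 0 ≤ p.1 i) ∧ 0 ≤ p.2 ∧ (∑ i, p.1 i) + p.2 = 1} with hK
  have hKsub : K ⊆ Metric.closedBall 0 2 := by
    rintro ⟨mu, c⟩ ⟨h1, h2, h3⟩
    rw [Metric.mem_closedBall, dist_zero_right, Prod.norm_def]
    have hci : c ≤ 1 := by
      have : 0 ≤ ∑ i, mu i := Finset.sum_nonneg fun i _ => h1 i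
      linarith
    have hmui : ∀ i, mu i ≤ 1 := by
      intro i
      have hle : mu i ≤ ∑ j, mu j :=
        Finset.single_le_sum (fun j _ => h1 j) (Finset.mem_univ i)
      linarith
    apply max_le
    · apply (pi_norm_le_iff_of_nonneg (by norm_num : (0:ℝ) ≤ 2)).mpr
      intro i
      rw [Real.norm_eq_abs, abs_of_nonneg (h1 i)]
      linarith [hmui i]
    · rw [Real.norm_eq_abs, abs_of_nonneg h2]
      linarith
  have hKclosed : IsClosed K := by
    have heq : K = (⋂ i, {p : (Fin d → ℝ) × ℝ | 0 ≤ p.1 i}) ∩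
        ({p : (Fin d → ℝ) × ℝ | 0 ≤ p.2} ∩ {p : (Fin d → ℝ) × ℝ | (∑ i, p.1 i) + p.2 = 1}) := by
      ext p
      simp only [hK, Set.mem_setOf_eq, Set.mem_inter_iff, Set.mem_iInter]
      try tauto
    rw [heq]
    apply IsClosed.inter
    · exact isClosed_iInter fun i =>
        isClosed_le continuous_const ((continuous_apply i).comp continuous_fst)
    · apply IsClosed.inter
      · exact isClosed_le continuous_const continuous_snd
      · apply isClosed_eq
        · apply Continuous.add
          · apply continuous_finset_sum
            intro i _
            exact (continuous_apply i).comp continuous_fst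
          · exact continuous_snd
        · exact continuous_const
  have hKcompact : IsCompact K :=
    Metric.isCompact_iff_isClosed_bounded.mpr
      ⟨hKclosed, Metric.isBounded_closedBall.subset hKsub⟩
  have hmem : ∀ n, (mus n, cs n) ∈ K := by
    intro n
    refine ⟨fun i => div_nonneg (hlam0 n i) (le_of_lt (htotpos n)),
      one_div_nonneg.mpr (le_of_lt (htotpos n)), ?_⟩
    show (∑ i, lams n i / tot n) + 1 / tot n = 1
    rw [← Finset.sum_div, ← add_div, div_eq_one_iff_eq (ne_of_gt (htotpos n))]
    simp only [htot]
    ring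
  -- pigeonhole on the finitely many selections
  obtain ⟨k₀, hk₀⟩ := Finite.exists_infinite_fiber ks
  have hseteq : (setOf (fun n => ks n = k₀)) = ks ⁻¹' {k₀} := by
    ext n
    exact Iff.rfl
  have hinf : (setOf (fun n => ks n = k₀)).Infinite := by
    rw [hseteq, ← Set.infinite_coe_iff]
    exact hk₀
  set e : ℕ → ℕ := Nat.nth (fun n => ks n = k₀) with he
  have hemono : StrictMono e := Nat.nth_strictMono hinf
  have heks : ∀ m, ks (e m) = k₀ := fun m => Nat.nth_mem_of_infinite hinf m
  obtain ⟨ρ, hρK, φ, hφmono, hφtend⟩ :=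
    hKcompact.tendsto_subseq (x := fun m => (mus (e m), cs (e m))) (fun m => hmem (e m))
  set E : ℕ → ℕ := fun m => e (φ m) with hE
  have hEmono : StrictMono E := hemono.comp hφmono
  have hEtop : Filter.Tendsto E Filter.atTop Filter.atTop := hEmono.tendsto_atTop
  -- componentwise limits
  have hmulim : ∀ i, Filter.Tendsto (fun m => mus (E m) i) Filter.atTop (nhds (ρ.1 i)) := by
    intro i
    have hc : Continuous (fun p : (Fin d → ℝ) × ℝ => p.1 i) :=
      (continuous_apply i).comp continuous_fst
    exact (hc.tendsto ρ).comp hφtend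
  have hclim : Filter.Tendsto (fun m => cs (E m)) Filter.atTop (nhds ρ.2) :=
    (continuous_snd.tendsto ρ).comp hφtend
  have hveclim : ∀ i, Filter.Tendsto (fun m => useq (E m) i (k₀ i)) Filter.atTop
      (nhds (u i (k₀ i))) := fun i => (hconv i (k₀ i)).comp hEtop
  -- the equation at stage m
  have heqn : ∀ m, cs (E m) • v = ∑ i, mus (E m) i • useq (E m) i (k₀ i) := by
    intro m
    have h1 := hlameq (E m)
    rw [show ks (E m) = k₀ from heks (φ m)] at h1
    show (1 / tot (E m)) • v = ∑ i, (lams (E m) i / tot (E m)) • useq (E m) i (k₀ i)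
    rw [one_div]
    calc (tot (E m))⁻¹ • v
        = (tot (E m))⁻¹ • ∑ i, lams (E m) i • useq (E m) i (k₀ i) := by rw [← h1]
      _ = ∑ i, (lams (E m) i / tot (E m)) • useq (E m) i (k₀ i) := by
          rw [Finset.smul_sum]
          refine Finset.sum_congr rfl fun i _ => ?_
          rw [smul_smul, div_eq_inv_mul]
  -- pass to the limit
  have hlhs : Filter.Tendsto (fun m => cs (E m) • v) Filter.atTop (nhds (ρ.2 • v)) :=
    hclim.smul_const v
  have hrhs : Filter.Tendsto (fun m => ∑ i, mus (E m) i • useq (E m) i (k₀ i))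
      Filter.atTop (nhds (∑ i, ρ.1 i • u i (k₀ i))) := by
    apply tendsto_finset_sum
    intro i _
    exact (hmulim i).smul (hveclim i)
  have heqfinal : ρ.2 • v = ∑ i, ρ.1 i • u i (k₀ i) := by
    apply tendsto_nhds_unique (f := fun m => cs (E m) • v) hlhs
    have : (fun m => cs (E m) • v) = fun m => ∑ i, mus (E m) i • useq (E m) i (k₀ i) :=
      funext heqn
    rw [this]
    exact hrhs
  exact ⟨k₀, ρ.1, ρ.2, hρK.1, hρK.2.1, hρK.2.2, heqfinal⟩


/-- extraction of a finite positive convex representation with at least 2 points -/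
lemma vcc_extract (X : Set (Ed d)) (p : Ed d) (hp : p ∈ convexHull ℝ X) (hpX : p ∉ X) :
    ∃ (M : ℕ) (y : Fin M → Ed d) (ww : Fin M → ℝ), 2 ≤ M ∧
      (∀ a, 0 < ww a) ∧ (∑ a, ww a = 1) ∧ (∀ a, y a ∈ X) ∧ (∑ a, ww a • y a = p) := by
  classical
  rw [_root_.convexHull_eq] at hp
  obtain ⟨ι, t, wt, z, hw0, hw1, hzX, hcm⟩ := hp
  set t' : Finset ι := t.filter (fun a => 0 < wt a) with ht'
  have ht'sub : t' ⊆ t := Finset.filter_subset _ _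
  have hsum1 : ∑ a ∈ t', wt a = 1 := by
    rw [ht', Finset.sum_filter_of_ne, hw1]
    intro a ha hne
    exact lt_of_le_of_ne (hw0 a ha) (Ne.symm hne)
  have hsump : ∑ a ∈ t', wt a • z a = p := by
    have h1 : ∑ a ∈ t', wt a • z a = ∑ a ∈ t, wt a • z a := by
      rw [ht', Finset.sum_filter_of_ne]
      intro a ha hne
      rcases lt_or_eq_of_le (hw0 a ha) with h | h
      · exact h
      · exfalso; apply hne; rw [← h, zero_smul]
    rw [h1]
    rw [Finset.centerMass_eq_of_sum_1 _ _ hw1] at hcm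
    exact hcm
  set M : ℕ := t'.card with hM
  set e : {x // x ∈ t'} ≃ Fin M := t'.equivFin with he
  set y : Fin M → Ed d := fun a => z (e.symm a).val with hy
  set ww : Fin M → ℝ := fun a => wt (e.symm a).val with hww
  have hwwpos : ∀ a, 0 < ww a := by
    intro a
    have h1 := (e.symm a).2
    have h2 : (e.symm a).val ∈ t.filter (fun a => 0 < wt a) := h1
    exact (Finset.mem_filter.mp h2).2
  have hyX : ∀ a, y a ∈ X := by
    intro a
    have := (e.symm a).2
    exact hzX _ (ht'sub this)
  have hsum_eq : ∀ (f : ι → ℝ), ∑ a : Fin M, f (e.symm a).val = ∑ a ∈ t', f a := by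
    intro f
    rw [← Finset.sum_attach t' f]
    exact Equiv.sum_comp e.symm (fun x => f x.val)
  have hsum_eqv : ∀ (f : ι → Ed d), ∑ a : Fin M, f (e.symm a).val = ∑ a ∈ t', f a := by
    intro f
    rw [← Finset.sum_attach t' f]
    exact Equiv.sum_comp e.symm (fun x => f x.val)
  have hwwsum : ∑ a, ww a = 1 := by rw [hww]; rw [hsum_eq]; exact hsum1
  have hyp : ∑ a, ww a • y a = p := by
    rw [hww, hy]
    rw [hsum_eqv (fun a => wt a • z a)]
    exact hsump
  have hM2 : 2 ≤ M := by
    by_contra hlt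
    push_neg at hlt
    rcases (by omega : M = 0 ∨ M = 1) with h0 | h1
    · haveI : IsEmpty (Fin M) := by rw [h0]; infer_instance
      rw [Finset.univ_eq_empty, Finset.sum_empty] at hwwsum
      norm_num at hwwsum
    · apply hpX
      set a₀ : Fin M := ⟨0, by omega⟩ with ha₀
      have hb : ∀ b : Fin M, b = a₀ := by
        intro b
        apply Fin.ext
        have := b.isLt
        omega
      have ha0 : ∑ a, ww a • y a = ww a₀ • y a₀ :=
        Finset.sum_eq_single_of_mem a₀ (Finset.mem_univ _)
          (fun b _ hbne => absurd (hb b) hbne)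
      have hb0 : ∑ a, ww a = ww a₀ :=
        Finset.sum_eq_single_of_mem a₀ (Finset.mem_univ _)
          (fun b _ hbne => absurd (hb b) hbne)
      rw [ha0] at hyp
      rw [hb0] at hwwsum
      rw [hwwsum, one_smul] at hyp
      rw [← hyp]
      exact hyX a₀
  exact ⟨M, y, ww, hM2, hwwpos, hwwsum, hyX, hyp⟩


end Assemble
end VCC

/-- Very colorful Carathéodory theorem (Bárány). -/
theorem very_colorful_caratheodory (d : ℕ) (X : Fin d → Set (Fin d → ℝ))
    (p q : Fin d → ℝ) (hp : ∀ i, p ∈ convexHull ℝ (X i)) :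
    ∃ x : Fin d → (Fin d → ℝ), (∀ i, x i ∈ X i) ∧
      p ∈ convexHull ℝ (insert q (Set.range x)) := by
  classical
  have hne : ∀ i, (X i).Nonempty := by
    intro i
    by_contra hcon
    rw [Set.not_nonempty_iff_eq_empty] at hcon
    have h1 := hp i
    rw [hcon, convexHull_empty] at h1
    exact h1
  by_cases hpq : p = q
  · refine ⟨fun i => (hne i).some, fun i => (hne i).some_mem, ?_⟩
    rw [hpq]
    exact subset_convexHull ℝ _ (Set.mem_insert q _)
  by_cases hpX : ∃ i₀, p ∈ X i₀
  · obtain ⟨i₀, hi₀⟩ := hpX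
    refine ⟨fun i => if i = i₀ then p else (hne i).some, ?_, ?_⟩
    · intro i
      dsimp only
      by_cases h : i = i₀
      · rw [if_pos h, h]; exact hi₀
      · rw [if_neg h]; exact (hne i).some_mem
    · apply subset_convexHull
      apply Set.mem_insert_of_mem
      exact ⟨i₀, by dsimp only; rw [if_pos rfl]⟩
  push_neg at hpX
  have hd : 0 < d := by
    by_contra hd0
    push_neg at hd0
    apply hpq
    funext i
    exact absurd i.isLt (by omega)
  -- extract finite representations with at least two points
  have hext := fun i => vcc_extract (X i) p (hp i) (hpX i)
  choose M y ww hM2 hwwpos hwwsum hyX hyp using hext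
  set n : Fin d → ℕ := fun i => M i - 2 with hn
  have hMn : ∀ i, n i + 1 + 1 = M i := fun i => by
    have := hM2 i
    simp only [hn]
    omega
  set Eq0 : ∀ i, Option (Fin (n i + 1)) ≃ Fin (M i) := fun i =>
    (finSuccEquiv (n i + 1)).symm.trans (finCongr (hMn i)) with hEq0
  set v : Ed d := p - q with hv
  set u0 : ∀ i, Option (Fin (n i + 1)) → Ed d := fun i k => y i (Eq0 i k) - p with hu0
  set w0 : ∀ i, Option (Fin (n i + 1)) → ℝ := fun i k => ww i (Eq0 i k) with hw0
  have hw0pos : ∀ i k, 0 < w0 i k := fun i k => hwwpos i _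
  have hzs : ∀ i, ∑ k, w0 i k • u0 i k = 0 := by
    intro i
    simp only [hu0, hw0]
    have h1 : ∑ k : Option (Fin (n i + 1)), ww i (Eq0 i k) • (y i (Eq0 i k) - p)
        = ∑ a : Fin (M i), ww i a • (y i a - p) :=
      Equiv.sum_comp (Eq0 i) (fun a => ww i a • (y i a - p))
    rw [h1]
    have h2 : ∑ a : Fin (M i), ww i a • (y i a - p)
        = (∑ a, ww i a • y i a) - (∑ a, ww i a) • p := by
      calc ∑ a : Fin (M i), ww i a • (y i a - p)
          = ∑ a : Fin (M i), (ww i a • y i a - ww i a • p) := by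
            refine Finset.sum_congr rfl fun a _ => smul_sub _ _ _
        _ = (∑ a, ww i a • y i a) - ∑ a : Fin (M i), ww i a • p := Finset.sum_sub_distrib _ _
        _ = (∑ a, ww i a • y i a) - (∑ a, ww i a) • p := by rw [Finset.sum_smul]
    rw [h2, hyp i, hwwsum i, one_smul, sub_self]
  -- perturbations along a sequence
  have hpert : ∀ N : ℕ, ∃ uu : ∀ i, Option (Fin (n i + 1)) → Ed d,
      (∀ i k, ‖uu i k - u0 i k‖ < (1:ℝ)/(N+1)) ∧ (∀ i, ∑ k, w0 i k • uu i k = 0) ∧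
      (∀ k : ∀ i, Option (Fin (n i + 1)), LinearIndependent ℝ (fun i => uu i (k i))) := by
    intro N
    exact vcc_perturb u0 w0 hw0pos hzs (by positivity)
  choose useq hclose hzseq hliseq using hpert
  have hsol : ∀ N, ∃ (k : ∀ i, Option (Fin (n i + 1))) (lam : Fin d → ℝ),
      (∀ i, 0 ≤ lam i) ∧ v = ∑ i, lam i • useq N i (k i) := by
    intro N
    exact vcc_core hd (hliseq N) w0 hw0pos (hzseq N) v
  have hconv : ∀ i k, Filter.Tendsto (fun N => useq N i k) Filter.atTop (nhds (u0 i k)) := by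
    intro i k
    rw [← tendsto_sub_nhds_zero_iff]
    apply squeeze_zero_norm (fun N => le_of_lt (hclose N i k))
    exact tendsto_one_div_add_atTop_nhds_zero_nat
  obtain ⟨k₀, mu, c, hmu0, hc0, hsum1, heq⟩ := vcc_limit u0 useq hconv v hsol
  set x : Fin d → Ed d := fun i => y i (Eq0 i (k₀ i)) with hx
  have hxX : ∀ i, x i ∈ X i := fun i => hyX i _
  have hexp : ∑ i, mu i • (x i - p) = (∑ i, mu i • x i) - (∑ i, mu i) • p := by
    calc ∑ i, mu i • (x i - p)
        = ∑ i, (mu i • x i - mu i • p) := by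
          refine Finset.sum_congr rfl fun i _ => smul_sub _ _ _
      _ = (∑ i, mu i • x i) - ∑ i, mu i • p := Finset.sum_sub_distrib _ _
      _ = (∑ i, mu i • x i) - (∑ i, mu i) • p := by rw [Finset.sum_smul]
  have heq2 : c • (p - q) = (∑ i, mu i • x i) - (∑ i, mu i) • p := by
    rw [← hexp]
    exact heq
  have hfinal : p = (∑ i, mu i • x i) + c • q := by
    have h5 : (∑ i, mu i) • p + c • p = (∑ i, mu i • x i) + c • q := by
      linear_combination (norm := module) heq2
    rw [← add_smul, hsum1, one_smul] at h5
    exact h5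
  refine ⟨x, hxX, ?_⟩
  have hkey : (Finset.univ : Finset (Option (Fin d))).centerMass
      (fun o => Option.elim o c (fun i => mu i)) (fun o => Option.elim o q x) = p := by
    rw [Finset.centerMass_eq_of_sum_1]
    · rw [Fintype.sum_option]
      show c • q + ∑ i, mu i • x i = p
      rw [hfinal]
      abel
    · rw [Fintype.sum_option]
      show c + ∑ i, mu i = 1
      linarith [hsum1]
  rw [← hkey]
  apply Finset.centerMass_mem_convexHull
  · intro o _
    match o with
    | none => exact hc0
    | some i => exact hmu0 i
  · rw [Fintype.sum_option]
    show (0:ℝ) < c + ∑ i, mu i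
    linarith [hsum1]
  · intro o _
    match o with
    | none => exact Set.mem_insert q _
    | some i => exact Set.mem_insert_of_mem _ ⟨i, rfl⟩
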